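/- Assume q_n ≥ c > 0 for all n ∈ ℤ₀. Then problem (P) has two linearly independent solutions ψ = (ψ_n)_{n∈ℤ} and χ = (χ_n)_{n∈ℤ} such that ∑_{n=0}^{∞} |ψ_n|² < ∞ and ∑_{n=−∞}^{0} |χ_n|² < ∞. -/

import Mathlib

open Filter Topology Finset


/- Problem (P): −Δ²y_{n−1} + q_n y_n = 0 on ℤ₀ = ℤ \ {0,1}, with impulse conditions
   y_{−1} = y₁, Δy_{−1} = e^{2iδ} Δy₁, for a sequence y : ℤ → ℂ. -/
def IsSolP (δ : ℝ) (q : ℤ → ℝ) (y : ℤ → ℂ) : Prop :=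
  (∀ n : ℤ, n ≠ 0 → n ≠ 1 →
    -(y (n + 1) - 2 * y n + y (n - 1)) + (q n : ℂ) * y n = 0) ∧
  y (-1) = y 1 ∧
  y 0 - y (-1) = Complex.exp (2 * (δ : ℂ) * Complex.I) * (y 2 - y 1)


noncomputable def cfApprox (b : ℕ → ℝ) : ℕ → ℕ → ℝ
  | 0, _ => 0
  | (m+1), n => 1 / (b n - cfApprox b m (n+1))

lemma cf_exists (c : ℝ) (hc : 0 < c) (b : ℕ → ℝ) (hb : ∀ n, 2 + c ≤ b n) :
    ∃ t : ℕ → ℝ, (∀ n, 0 < t n) ∧ (∀ n, t n ≤ 1/(1+c)) ∧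
      ∀ n, t n * (b n - t (n+1)) = 1 := by
  have h1c : (0:ℝ) < 1 + c := by linarith
  have hle1 : 1/(1+c) ≤ 1 := by rw [div_le_one h1c]; linarith
  have hbound : ∀ m n, 0 ≤ cfApprox b m n ∧ cfApprox b m n ≤ 1/(1+c) := by
    intro m
    induction m with
    | zero => intro n; constructor <;> simp [cfApprox] <;> positivity
    | succ m ih =>
      intro n
      have h1 := (ih (n+1)).1
      have h2 := (ih (n+1)).2
      have hden : 1 + c ≤ b n - cfApprox b m (n+1) := by
        have := hb n; linarith
      have hdpos : 0 < b n - cfApprox b m (n+1) := lt_of_lt_of_le h1c hden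
      constructor
      · simp only [cfApprox]; positivity
      · simp only [cfApprox]
        exact one_div_le_one_div_of_le h1c hden
  have key : ∀ m n, cfApprox b m n ≤ cfApprox b (m+1) n := by
    intro m
    induction m with
    | zero =>
      intro n
      have hbn : 0 < b n := by have := hb n; linarith
      simp only [cfApprox]
      rw [sub_zero]
      positivity
    | succ m ih =>
      intro n
      simp only [cfApprox]
      have hdpos : 0 < b n - cfApprox b (m+1) (n+1) := by
        have := (hbound (m+1) (n+1)).2; have := hb n; linarith
      apply one_div_le_one_div_of_le hdpos
      have := ih (n+1); linarith
  have hmono : ∀ n, Monotone (fun m => cfApprox b m n) :=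
    fun n => monotone_nat_of_le_succ (fun m => key m n)
  have hbdd : ∀ n, BddAbove (Set.range (fun m => cfApprox b m n)) := by
    intro n
    exact ⟨1/(1+c), by rintro x ⟨m, rfl⟩; exact (hbound m n).2⟩
  set t : ℕ → ℝ := fun n => ⨆ m, cfApprox b m n with ht
  have htend : ∀ n, Tendsto (fun m => cfApprox b m n) atTop (𝓝 (t n)) :=
    fun n => tendsto_atTop_ciSup (hmono n) (hbdd n)
  have htle : ∀ n, t n ≤ 1/(1+c) := fun n => ciSup_le (fun m => (hbound m n).2)
  have htpos : ∀ n, 0 < t n := by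
    intro n
    have h1 : cfApprox b 1 n ≤ t n := le_ciSup (hbdd n) 1
    have h2 : 0 < cfApprox b 1 n := by
      have hbn : 0 < b n := by have := hb n; linarith
      simp only [cfApprox]
      rw [sub_zero]
      positivity
    linarith
  refine ⟨t, htpos, htle, fun n => ?_⟩
  have hdne : b n - t (n+1) ≠ 0 := by
    have h1 := htle (n+1); have h2 := hb n; have h3 := htpos (n+1)
    intro h; nlinarith
  have hlim1 : Tendsto (fun m => cfApprox b (m+1) n) atTop (𝓝 (t n)) :=
    (htend n).comp (tendsto_add_atTop_nat 1)
  have hlim2 : Tendsto (fun m => cfApprox b (m+1) n) atTop (𝓝 (1/(b n - t (n+1)))) := by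
    simp only [cfApprox]
    exact tendsto_const_nhds.div (tendsto_const_nhds.sub (htend (n+1))) hdne
  have heq := tendsto_nhds_unique hlim1 hlim2
  rw [heq]
  field_simp


noncomputable def fwd (q : ℤ → ℝ) (α β : ℂ) : ℕ → ℂ
  | 0 => α
  | 1 => β
  | (k+2) => (2 + (q ((k:ℤ)+2) : ℂ)) * fwd q α β (k+1) - fwd q α β k

noncomputable def bwd (q : ℤ → ℝ) (γ α : ℂ) : ℕ → ℂ
  | 0 => γ
  | 1 => α
  | (k+2) => (2 + (q (-(k:ℤ)-1) : ℂ)) * bwd q γ α (k+1) - bwd q γ α k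

noncomputable def sol (δ : ℝ) (q : ℤ → ℝ) (α β : ℂ) (n : ℤ) : ℂ :=
  if 1 ≤ n then fwd q α β (n - 1).toNat
  else bwd q (α + Complex.exp (2 * (δ:ℂ) * Complex.I) * (β - α)) α (-n).toNat

lemma sol_apply_pos (δ : ℝ) (q : ℤ → ℝ) (α β : ℂ) (k : ℕ) :
    sol δ q α β ((k:ℤ)+1) = fwd q α β k := by
  simp only [sol]
  rw [if_pos (by omega)]
  congr 1
  omega

lemma sol_apply_neg (δ : ℝ) (q : ℤ → ℝ) (α β : ℂ) (k : ℕ) :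
    sol δ q α β (-(k:ℤ)) =
      bwd q (α + Complex.exp (2 * (δ:ℂ) * Complex.I) * (β - α)) α k := by
  simp only [sol]
  rw [if_neg (by omega)]
  congr 1
  omega

lemma isSolP_sol (δ : ℝ) (q : ℤ → ℝ) (α β : ℂ) : IsSolP δ q (sol δ q α β) := by
  set γ := α + Complex.exp (2 * (δ:ℂ) * Complex.I) * (β - α) with hγ
  refine ⟨?_, ?_, ?_⟩
  · intro n hn0 hn1
    rcases le_or_gt 2 n with h2 | h2
    · obtain ⟨k, rfl⟩ : ∃ k : ℕ, n = (k:ℤ)+2 := ⟨(n-2).toNat, by omega⟩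
      have e1 : (k:ℤ)+2+1 = ((k+2:ℕ):ℤ)+1 := by push_cast; ring
      have e2 : (k:ℤ)+2-1 = ((k:ℕ):ℤ)+1 := by push_cast; ring
      have e3 : (k:ℤ)+2 = ((k+1:ℕ):ℤ)+1 := by push_cast; ring
      rw [e1, e2]
      rw [show sol δ q α β ((k:ℤ)+2) = fwd q α β (k+1) from by rw [e3, sol_apply_pos]]
      rw [sol_apply_pos, sol_apply_pos]
      rw [show fwd q α β (k+2) =
        (2 + (q ((k:ℤ)+2) : ℂ)) * fwd q α β (k+1) - fwd q α β k from rfl]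
      ring
    · have h1 : n ≤ -1 := by omega
      obtain ⟨k, rfl⟩ : ∃ k : ℕ, n = -(k:ℤ)-1 := ⟨(-n-1).toNat, by omega⟩
      have e1 : -(k:ℤ)-1+1 = -((k:ℕ):ℤ) := by push_cast; ring
      have e2 : -(k:ℤ)-1-1 = -((k+2:ℕ):ℤ) := by push_cast; ring
      have e3 : -(k:ℤ)-1 = -((k+1:ℕ):ℤ) := by push_cast; ring
      rw [e1, e2]
      rw [show sol δ q α β (-(k:ℤ)-1) = bwd q γ α (k+1) from by rw [e3, sol_apply_neg]]
      rw [sol_apply_neg, sol_apply_neg]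
      rw [show bwd q γ α (k+2) =
        (2 + (q (-(k:ℤ)-1) : ℂ)) * bwd q γ α (k+1) - bwd q γ α k from rfl]
      ring
  · have m1 : sol δ q α β (-1) = α := by
      simp only [sol]; rw [if_neg (by omega)]; norm_num [bwd]
    have p1 : sol δ q α β 1 = α := by
      simp only [sol]; rw [if_pos (by omega)]; norm_num [fwd]
    rw [m1, p1]
  · have m1 : sol δ q α β (-1) = α := by
      simp only [sol]; rw [if_neg (by omega)]; norm_num [bwd]
    have p1 : sol δ q α β 1 = α := by
      simp only [sol]; rw [if_pos (by omega)]; norm_num [fwd]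
    have p2 : sol δ q α β 2 = β := by
      simp only [sol]; rw [if_pos (by omega)]; norm_num [fwd]
    have m0 : sol δ q α β 0 = γ := by
      simp only [sol]; rw [if_neg (by omega)]; norm_num [bwd]; exact hγ.symm
    rw [m1, p1, p2, m0, hγ]; ring

lemma fwd_eq_of (q : ℤ → ℝ) (α β : ℂ) (f : ℕ → ℂ) (h0 : f 0 = α) (h1 : f 1 = β)
    (hrec : ∀ k, f (k+2) = (2 + (q ((k:ℤ)+2):ℂ)) * f (k+1) - f k) :
    ∀ k, fwd q α β k = f k := by
  have H : ∀ k, fwd q α β k = f k ∧ fwd q α β (k+1) = f (k+1) := by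
    intro k
    induction k with
    | zero => exact ⟨h0.symm, h1.symm⟩
    | succ m ih =>
      refine ⟨ih.2, ?_⟩
      rw [show fwd q α β (m+1+1) =
        (2 + (q ((m:ℤ)+2):ℂ)) * fwd q α β (m+1) - fwd q α β m from rfl]
      rw [ih.1, ih.2, ← hrec m]
  exact fun k => (H k).1

lemma bwd_eq_of (q : ℤ → ℝ) (γ α : ℂ) (f : ℕ → ℂ) (h0 : f 0 = γ) (h1 : f 1 = α)
    (hrec : ∀ k, f (k+2) = (2 + (q (-(k:ℤ)-1):ℂ)) * f (k+1) - f k) :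
    ∀ k, bwd q γ α k = f k := by
  have H : ∀ k, bwd q γ α k = f k ∧ bwd q γ α (k+1) = f (k+1) := by
    intro k
    induction k with
    | zero => exact ⟨h0.symm, h1.symm⟩
    | succ m ih =>
      refine ⟨ih.2, ?_⟩
      rw [show bwd q γ α (m+1+1) =
        (2 + (q (-(m:ℤ)-1):ℂ)) * bwd q γ α (m+1) - bwd q γ α m from rfl]
      rw [ih.1, ih.2, ← hrec m]
  exact fun k => (H k).1



/-- if q_n ≥ c > 0 on ℤ₀, problem (P) has two linearly independent
solutions ψ and χ with ∑_{n=0}^{∞} |ψ_n|² < ∞ and ∑_{n=−∞}^{0} |χ_n|² < ∞. -/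
theorem special_solutions_exist (δ : ℝ) (hδ : 0 ≤ δ ∧ δ < Real.pi / 2)
    (q : ℤ → ℝ) (c : ℝ) (hc : 0 < c) (hq : ∀ n : ℤ, n ≠ 0 → n ≠ 1 → c ≤ q n) :
    ∃ ψ χ : ℤ → ℂ, IsSolP δ q ψ ∧ IsSolP δ q χ ∧
      LinearIndependent ℂ ![ψ, χ] ∧
      Summable (fun n : ℕ => ‖ψ (n : ℤ)‖ ^ 2) ∧
      Summable (fun n : ℕ => ‖χ (-(n : ℤ))‖ ^ 2) := by
  obtain ⟨hδ0, hδπ⟩ := hδ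
  have h1c : (0:ℝ) < 1 + c := by linarith
  set r : ℝ := 1/(1+c) with hr
  have hr0 : 0 < r := by positivity
  have hr1 : r < 1 := by rw [hr, div_lt_one h1c]; linarith
  set E := Complex.exp (2 * (δ:ℂ) * Complex.I) with hE
  have hEne : E ≠ 0 := Complex.exp_ne_zero _
  -- decaying ratios on the positive side
  obtain ⟨t, htpos, htle, htrel⟩ := cf_exists c hc (fun k => 2 + q ((k:ℤ)+2))
    (fun k => by
      have := hq ((k:ℤ)+2) (by omega) (by omega)
      show 2 + c ≤ 2 + q ((k:ℤ)+2); linarith)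
  -- decaying ratios on the negative side
  obtain ⟨s, hspos, hsle, hsrel⟩ := cf_exists c hc (fun k => 2 + q (-(k:ℤ)-2))
    (fun k => by
      have := hq (-(k:ℤ)-2) (by omega) (by omega)
      show 2 + c ≤ 2 + q (-(k:ℤ)-2); linarith)
  set u : ℕ → ℝ := fun k => ∏ j ∈ Finset.range k, t j with hu
  set w : ℕ → ℝ := fun k => ∏ j ∈ Finset.range k, s j with hw
  have hupos : ∀ k, 0 < u k := fun k => Finset.prod_pos (fun j _ => htpos j)
  have hwpos : ∀ k, 0 < w k := fun k => Finset.prod_pos (fun j _ => hspos j)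
  have hule : ∀ k, u k ≤ r ^ k := by
    intro k
    rw [hu]
    calc ∏ j ∈ Finset.range k, t j ≤ ∏ j ∈ Finset.range k, r :=
          Finset.prod_le_prod (fun j _ => (htpos j).le) (fun j _ => htle j)
      _ = r ^ k := by rw [Finset.prod_const, Finset.card_range]
  have hwle : ∀ k, w k ≤ r ^ k := by
    intro k
    rw [hw]
    calc ∏ j ∈ Finset.range k, s j ≤ ∏ j ∈ Finset.range k, r :=
          Finset.prod_le_prod (fun j _ => (hspos j).le) (fun j _ => hsle j)
      _ = r ^ k := by rw [Finset.prod_const, Finset.card_range]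
  have hu0 : u 0 = 1 := by simp [hu]
  have hw0 : w 0 = 1 := by simp [hw]
  have husucc : ∀ k, u (k+1) = u k * t k := fun k => Finset.prod_range_succ _ _
  have hwsucc : ∀ k, w (k+1) = w k * s k := fun k => Finset.prod_range_succ _ _
  set χ0 : ℝ := (2 + q (-1)) - s 0 with hχ0
  have hχ0big : 1 + c ≤ χ0 := by
    have h1 := hq (-1) (by omega) (by omega)
    have h2 := hsle 0
    have h3 : r ≤ 1 := hr1.le
    rw [hχ0]; linarith
  set ψ : ℤ → ℂ := sol δ q 1 ((t 0 : ℝ) : ℂ) with hψ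
  set χ2 : ℂ := 1 + E⁻¹ * (((χ0 : ℝ) : ℂ) - 1) with hχ2
  set χ : ℤ → ℂ := sol δ q 1 χ2 with hχdef
  -- fwd for ψ equals u
  have hψfwd : ∀ k, fwd q 1 ((t 0 : ℝ) : ℂ) k = ((u k : ℝ) : ℂ) := by
    apply fwd_eq_of
    · rw [hu0]; norm_num
    · rw [husucc 0, hu0]; norm_num
    · intro k
      have hrec : u (k+2) = (2 + q ((k:ℤ)+2)) * u (k+1) - u k := by
        have h := htrel k
        rw [husucc (k+1), husucc k]
        linear_combination (-(u k)) * h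
      push_cast [hrec]
      ring
  -- bwd for χ equals (χ0, w ·)
  have hγχ : (1:ℂ) + E * (χ2 - 1) = ((χ0:ℝ):ℂ) := by
    rw [hχ2]
    field_simp
    ring
  have hχbwd : ∀ k, bwd q ((1:ℂ) + E * (χ2 - 1)) 1 k =
      Nat.casesOn k (((χ0:ℝ):ℂ)) (fun j => ((w j : ℝ) : ℂ)) := by
    apply bwd_eq_of
    · exact hγχ.symm
    · show ((w 0 : ℝ):ℂ) = 1
      rw [hw0]; norm_num
    · intro k
      cases k with
      | zero =>
        show ((w 1 : ℝ):ℂ) = (2 + (q (-1):ℂ)) * ((w 0:ℝ):ℂ) - ((χ0:ℝ):ℂ)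
        have : w 1 = (2 + q (-1)) * w 0 - χ0 := by
          rw [hwsucc 0, hw0, hχ0]; ring
        push_cast [this]; ring
      | succ j =>
        show ((w (j+2) : ℝ):ℂ) = (2 + (q (-((j:ℤ)+1)-1):ℂ)) * ((w (j+1):ℝ):ℂ) - ((w j:ℝ):ℂ)
        have h := hsrel j
        have hrec : w (j+2) = (2 + q (-(j:ℤ)-2)) * w (j+1) - w j := by
          rw [hwsucc (j+1), hwsucc j]
          linear_combination (-(w j)) * h
        have : (-((j:ℤ)+1)-1) = (-(j:ℤ)-2) := by ring
        rw [this]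
        push_cast [hrec]; ring
  -- pointwise values
  have hψval : ∀ k : ℕ, ψ ((k:ℤ)+1) = ((u k : ℝ) : ℂ) := by
    intro k; rw [hψ, sol_apply_pos, hψfwd]
  have hχval : ∀ k : ℕ, χ (-((k+1:ℕ):ℤ)) = ((w k : ℝ) : ℂ) := by
    intro k
    rw [hχdef, sol_apply_neg]
    rw [← hE, hχbwd (k+1)]
  refine ⟨ψ, χ, isSolP_sol δ q _ _, isSolP_sol δ q _ _, ?_, ?_, ?_⟩
  · -- linear independence
    rw [linearIndependent_fin2]
    simp only [Matrix.cons_val_zero, Matrix.cons_val_one, Matrix.head_cons]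
    have hχ1 : χ 1 = 1 := by
      have := hψval
      rw [hχdef]
      rw [show (1:ℤ) = ((0:ℕ):ℤ)+1 from by norm_num, sol_apply_pos]
      rfl
    have hχ2v : χ 2 = χ2 := by
      rw [hχdef]
      rw [show (2:ℤ) = ((1:ℕ):ℤ)+1 from by norm_num, sol_apply_pos]
      rfl
    have hψ1 : ψ 1 = 1 := by
      rw [hψ]
      rw [show (1:ℤ) = ((0:ℕ):ℤ)+1 from by norm_num, sol_apply_pos]
      rfl
    have hψ2 : ψ 2 = ((t 0 : ℝ):ℂ) := by
      rw [hψ]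
      rw [show (2:ℤ) = ((1:ℕ):ℤ)+1 from by norm_num, sol_apply_pos]
      rfl
    have hne : χ2 ≠ ((t 0 : ℝ):ℂ) := by
      rcases eq_or_ne δ 0 with hδe | hδe
      · -- δ = 0 : E = 1, χ2 = χ0 real and large
        have hE1 : E = 1 := by rw [hE, hδe]; norm_num
        rw [hχ2, hE1]
        intro hcon
        have : ((χ0:ℝ):ℂ) = ((t 0:ℝ):ℂ) := by
          rw [← hcon]; ring
        have heq : χ0 = t 0 := by exact_mod_cast this
        have := htle 0
        have := htpos 0
        nlinarith [hχ0big, hr1]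
      · -- δ ≠ 0 : imaginary parts differ
        have hδpos : 0 < δ := lt_of_le_of_ne hδ0 (Ne.symm hδe)
        have hsin : 0 < Real.sin (2*δ) := by
          apply Real.sin_pos_of_pos_of_lt_pi <;> linarith [Real.pi_pos]
        have hEinv : E⁻¹ = Complex.exp ((((-(2*δ)):ℝ):ℂ) * Complex.I) := by
          rw [hE, ← Complex.exp_neg]
          congr 1
          push_cast
          ring
        intro hcon
        have him := congrArg Complex.im hcon
        rw [hχ2] at him
        simp only [Complex.add_im, Complex.one_im, Complex.mul_im, Complex.sub_im,
          Complex.ofReal_im, Complex.one_im, Complex.sub_re, Complex.ofReal_re,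
          Complex.one_re] at him
        rw [hEinv] at him
        rw [Complex.exp_ofReal_mul_I_im, Complex.exp_ofReal_mul_I_re] at him
        rw [Real.sin_neg] at him
        have : -Real.sin (2*δ) * (χ0 - 1) = 0 := by linarith [him]
        nlinarith [hχ0big, hsin]
    constructor
    · intro h
      have := congrFun h 1
      rw [hχ1] at this
      simp at this
    · intro a ha
      have h1 := congrFun ha 1
      have h2 := congrFun ha 2
      simp only [Pi.smul_apply, smul_eq_mul] at h1 h2
      rw [hχ1, hψ1, mul_one] at h1
      rw [hχ2v, hψ2, h1, one_mul] at h2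
      exact hne h2
  · -- summability of ψ on ℕ
    rw [← summable_nat_add_iff 1]
    have hterm : ∀ n : ℕ, ‖ψ (((n+1:ℕ)):ℤ)‖ ^ 2 ≤ (r^2)^n := by
      intro n
      have : (((n+1:ℕ)):ℤ) = (n:ℤ)+1 := by push_cast; ring
      rw [this, hψval n, Complex.norm_real, Real.norm_eq_abs, abs_of_pos (hupos n)]
      calc u n ^ 2 ≤ (r^n)^2 := by
            have := hule n; have := (hupos n).le; nlinarith
        _ = (r^2)^n := by rw [← pow_mul, ← pow_mul, Nat.mul_comm]
    apply Summable.of_nonneg_of_le (fun n => by positivity) hterm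
    exact summable_geometric_of_lt_one (by positivity) (by nlinarith)
  · -- summability of χ on -ℕ
    rw [← summable_nat_add_iff 1]
    have hterm : ∀ n : ℕ, ‖χ (-((n+1:ℕ):ℤ))‖ ^ 2 ≤ (r^2)^n := by
      intro n
      rw [hχval n, Complex.norm_real, Real.norm_eq_abs, abs_of_pos (hwpos n)]
      calc w n ^ 2 ≤ (r^n)^2 := by
            have := hwle n; have := (hwpos n).le; nlinarith
        _ = (r^2)^n := by rw [← pow_mul, ← pow_mul, Nat.mul_comm]
    apply Summable.of_nonneg_of_le (fun n => by positivity) hterm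
    exact summable_geometric_of_lt_one (by positivity) (by nlinarith)
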